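/- For a matrix M ∈ M_{n+1}(F), the following are equivalent: (1) M²x lies in the span of {x, Mx} for every nonzero x ∈ V; (2) ξM² lies in the span of {ξ, ξM} for every nonzero linear functional ξ ∈ V*. -/

import Mathlib

open Polynomial Matrix

/-- In a finitely generated torsion module over a PID, there is an element whose
annihilator is contained in the annihilator of the whole module. -/
lemma exists_elem_torsion_le_annihilator
    {R : Type u} [CommRing R] [IsDomain R] [IsPrincipalIdealRing R]
    {N : Type u} [AddCommGroup N] [Module R N] [Module.Finite R N]
    (hN : Module.IsTorsion R N) :
    ∃ v : N, ∀ q : R, q • v = 0 → ∀ x : N, q • x = 0 := by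
  obtain ⟨ι, _, p, hp, e, ⟨E⟩⟩ := Module.equiv_directSum_of_isTorsion hN
  classical
  let L := DirectSum.linearEquivFunOnFintype R ι (fun i => R ⧸ R ∙ p i ^ e i)
  refine ⟨E.symm (L.symm (fun i => Submodule.Quotient.mk 1)), fun q hq x => ?_⟩
  have hq' : ∀ i : ι, q ∈ (R ∙ p i ^ e i) := by
    intro i
    have h1 : L (E (q • E.symm (L.symm (fun i => Submodule.Quotient.mk 1)))) = 0 := by
      rw [hq]; simp
    rw [_root_.map_smul, E.apply_symm_apply, _root_.map_smul, L.apply_symm_apply] at h1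
    have h2 : (q • fun i => (Submodule.Quotient.mk 1 : R ⧸ R ∙ p i ^ e i)) i = 0 := by
      rw [h1]; rfl
    have h3 : (Submodule.Quotient.mk (q • (1:R)) : R ⧸ R ∙ p i ^ e i) = 0 := by
      rw [Submodule.Quotient.mk_smul]; exact h2
    rw [smul_eq_mul, mul_one] at h3
    exact (Submodule.Quotient.mk_eq_zero _).mp h3
  apply E.injective
  rw [_root_.map_smul, map_zero]
  apply L.injective
  rw [_root_.map_smul, map_zero]
  funext i
  show q • (L (E x) i) = 0
  induction (L (E x) i) using Submodule.Quotient.induction_on with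
  | H r =>
    rw [← Submodule.Quotient.mk_smul, Submodule.Quotient.mk_eq_zero]
    simpa [smul_eq_mul, mul_comm] using (R ∙ p i ^ e i).smul_mem r (hq' i)

/-- If `f² x ∈ span {x, f x}` for every `x`, then `f` satisfies a quadratic relation. -/
lemma exists_quadratic_rel {F : Type u} [Field F] {V : Type u} [AddCommGroup V] [Module F V]
    [FiniteDimensional F V] (f : Module.End F V)
    (h : ∀ x : V, f (f x) ∈ Submodule.span F {x, f x}) :
    ∃ a b : F, ∀ x : V, f (f x) = a • f x + b • x := by
  have htor : Module.IsTorsion F[X] (Module.AEval' f) :=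
    Module.AEval.isTorsion_of_finiteDimensional F V f
  obtain ⟨v, hv⟩ := exists_elem_torsion_le_annihilator htor
  set x := (Module.AEval.of F V f).symm v with hx
  obtain ⟨a, b, hab⟩ := Submodule.mem_span_pair.mp (h x)
  set q : F[X] := X ^ 2 - C b * X - C a with hqdef
  have key : ∀ y : V, (aeval f q) y = f (f y) - b • f y - a • y := by
    intro y
    simp [hqdef, pow_two, mul_smul, Module.End.smul_def]
  have hqv : q • v = 0 := by
    apply (Module.AEval.of F V f).symm.injective
    rw [Module.AEval.of_symm_smul, map_zero, ← hx]
    have : aeval f q • x = (aeval f q) x := rfl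
    rw [this, key x, ← hab]
    abel
  refine ⟨b, a, fun z => ?_⟩
  have h1 := hv q hqv (Module.AEval.of F V f z)
  have h0 : aeval f q • z = (0 : V) := by
    have h2 := congrArg (Module.AEval.of F V f).symm h1
    rwa [Module.AEval.of_symm_smul, map_zero, LinearEquiv.symm_apply_apply] at h2
  have h2 : (aeval f q) z = 0 := h0
  rw [key z, sub_sub, sub_eq_zero] at h2
  rw [h2]

/-- From the span condition for columns, extract a global quadratic relation for `M`. -/
lemma matrix_quadratic_rel {F : Type u} [Field F] {n : ℕ}
    (M : Matrix (Fin (n+1)) (Fin (n+1)) F)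
    (h : ∀ x : Fin (n+1) → F, x ≠ 0 →
        M.mulVec (M.mulVec x) ∈ Submodule.span F {x, M.mulVec x}) :
    ∃ a b : F, M * M = a • M + b • 1 := by
  have hsp : ∀ x : Fin (n+1) → F,
      M.mulVecLin (M.mulVecLin x) ∈ Submodule.span F {x, M.mulVecLin x} := by
    intro x
    by_cases hx : x = 0
    · subst hx
      simp only [Matrix.mulVecLin_apply, Matrix.mulVec_zero]
      exact Submodule.zero_mem _
    · simpa only [Matrix.mulVecLin_apply] using h x hx
  obtain ⟨a, b, hab⟩ := exists_quadratic_rel (M.mulVecLin) hsp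
  · have h' : ∀ x, (M * M).mulVec x = (a • M + b • 1).mulVec x := by
      intro x
      rw [← Matrix.mulVec_mulVec]
      have hx := hab x
      simp only [Matrix.mulVecLin_apply] at hx
      rw [hx, Matrix.add_mulVec, Matrix.smul_mulVec, Matrix.smul_mulVec,
        Matrix.one_mulVec]
    refine ⟨a, b, ?_⟩
    ext i j
    have hx := congrFun (h' (Pi.single j 1)) i
    simpa [Matrix.mulVec_single] using hx

/-- A quadratic relation implies the column span condition. -/
lemma rel_implies_left {F : Type u} [Field F] {n : ℕ}
    (M : Matrix (Fin (n+1)) (Fin (n+1)) F) {a b : F} (hrel : M * M = a • M + b • 1) :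
    ∀ x : Fin (n+1) → F,
        M.mulVec (M.mulVec x) ∈ Submodule.span F {x, M.mulVec x} := by
  intro x
  rw [Matrix.mulVec_mulVec, hrel, Matrix.add_mulVec, Matrix.smul_mulVec,
    Matrix.smul_mulVec, Matrix.one_mulVec]
  exact Submodule.mem_span_pair.mpr ⟨b, a, by abel⟩

/-- `M²x ∈ span {x, Mx}` for all nonzero `x` iff
`ξM² ∈ span {ξ, ξM}` for all nonzero functionals (row vectors) `ξ`. -/
theorem square_in_span_right_iff_left (F : Type*) [Field F] (n : ℕ)
    (M : Matrix (Fin (n+1)) (Fin (n+1)) F) :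
    (∀ x : Fin (n+1) → F, x ≠ 0 →
        M.mulVec (M.mulVec x) ∈ Submodule.span F {x, M.mulVec x})
      ↔ (∀ ξ : Fin (n+1) → F, ξ ≠ 0 →
          Matrix.vecMul (Matrix.vecMul ξ M) M
            ∈ Submodule.span F {ξ, Matrix.vecMul ξ M}) := by
  constructor
  · intro h1 ξ hξ
    obtain ⟨a, b, hrel⟩ := matrix_quadratic_rel M h1
    have hT : Mᵀ * Mᵀ = a • Mᵀ + b • 1 := by
      calc Mᵀ * Mᵀ = (M * M)ᵀ := by rw [Matrix.transpose_mul]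
        _ = (a • M + b • 1)ᵀ := by rw [hrel]
        _ = a • Mᵀ + b • 1 := by
            rw [Matrix.transpose_add, Matrix.transpose_smul, Matrix.transpose_smul,
              Matrix.transpose_one]
    have := rel_implies_left Mᵀ hT ξ
    rwa [Matrix.mulVec_transpose, Matrix.mulVec_transpose] at this
  · intro h2 x hx
    have h2' : ∀ ξ : Fin (n+1) → F, ξ ≠ 0 →
        Mᵀ.mulVec (Mᵀ.mulVec ξ) ∈ Submodule.span F {ξ, Mᵀ.mulVec ξ} := by
      intro ξ hξ
      rw [Matrix.mulVec_transpose, Matrix.mulVec_transpose]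
      exact h2 ξ hξ
    obtain ⟨a, b, hrel⟩ := matrix_quadratic_rel Mᵀ h2'
    have hT : M * M = a • M + b • 1 := by
      calc M * M = (Mᵀ * Mᵀ)ᵀ := by
            rw [Matrix.transpose_mul, Matrix.transpose_transpose]
        _ = (a • Mᵀ + b • 1)ᵀ := by rw [hrel]
        _ = a • M + b • 1 := by
            rw [Matrix.transpose_add, Matrix.transpose_smul, Matrix.transpose_smul,
              Matrix.transpose_one, Matrix.transpose_transpose]
    exact rel_implies_left M hT x
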